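/- Let G be a finite group whose order is divisible by at least two distinct primes, and suppose that every 2-maximal subgroup of G is a Hall subgroup of G. Then every maximal subgroup of G is a Hall subgroup of G. -/

import Mathlib

/-- A subgroup `H` of a group `G` is a Hall subgroup if its order and index are coprime. -/
def IsHallSubgroup {G : Type*} [Group G] (H : Subgroup G) : Prop :=
  Nat.Coprime (Nat.card H) H.index

/-- `H` is a maximal subgroup of `M` (both viewed as subgroups of the ambient group). -/
def IsMaximalIn {G : Type*} [Group G] (H M : Subgroup G) : Prop :=
  H < M ∧ ∀ K : Subgroup G, H < K → K ≤ M → K = M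

/-- `H` is a 2-maximal subgroup of `G`: it is maximal in some maximal subgroup of `G`. -/
def Is2Maximal {G : Type*} [Group G] (H : Subgroup G) : Prop :=
  ∃ M : Subgroup G, IsCoatom M ∧ IsMaximalIn H M

/-- A group is supersolvable if it has a chain of normal subgroups from `⊥` to `⊤`
with all successive quotients cyclic. -/
def IsSupersolvable (G : Type*) [Group G] : Prop :=
  ∃ (n : ℕ) (H : Fin (n + 1) → Subgroup G) (hnorm : ∀ i, (H i).Normal),
    H 0 = ⊥ ∧ H (Fin.last n) = ⊤ ∧ Monotone H ∧
    ∀ i : Fin n, IsCyclic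
      ((H i.succ).map (@QuotientGroup.mk' G _ (H i.castSucc) (hnorm i.castSucc)))

theorem maximal_is_hall_of_two_maximal_hall
    {G : Type*} [Group G] [Finite G]
    (hπ : ∃ p q : ℕ, p.Prime ∧ q.Prime ∧ p ≠ q ∧ p ∣ Nat.card G ∧ q ∣ Nat.card G)
    (hhall : ∀ H : Subgroup G, Is2Maximal H → IsHallSubgroup H) :
    ∀ M : Subgroup G, IsCoatom M → IsHallSubgroup M := by
  intro M hM
  rw [IsHallSubgroup]
  by_contra hcop
  obtain ⟨p, hp, hpM, hpI⟩ := Nat.Prime.not_coprime_iff_dvd.mp hcop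
  haveI : Fact p.Prime := ⟨hp⟩
  by_cases hPG : IsPGroup p M
  · -- M is a p-group: it is contained in a Sylow p-subgroup S; M ≠ S since p ∣ M.index,
    -- so M < S, hence S = ⊤ by maximality, so G is a p-group, contradicting hπ.
    obtain ⟨S, hMS⟩ := hPG.exists_le_sylow
    have hMneS : M ≠ (S : Subgroup G) := by
      intro h
      exact S.not_dvd_index (h ▸ hpI)
    have hStop : (S : Subgroup G) = ⊤ := hM.2 _ (lt_of_le_of_ne hMS hMneS)
    have hGp : IsPGroup p G := by
      have := S.2
      rw [hStop] at this
      exact this.of_surjective (Subgroup.topEquiv : (⊤ : Subgroup G) ≃* G).toMonoidHom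
        (Subgroup.topEquiv : (⊤ : Subgroup G) ≃* G).surjective
    obtain ⟨n, hn⟩ := hGp.exists_card_eq
    obtain ⟨a, b, ha, hb, hab, haG, hbG⟩ := hπ
    have hap : a = p := (Nat.prime_dvd_prime_iff_eq ha hp).mp
      (ha.dvd_of_dvd_pow (hn ▸ haG : a ∣ p ^ n))
    have hbp : b = p := (Nat.prime_dvd_prime_iff_eq hb hp).mp
      (hb.dvd_of_dvd_pow (hn ▸ hbG : b ∣ p ^ n))
    exact hab (hap.trans hbp.symm)
  · -- M is not a p-group: take a Sylow p-subgroup P of M, extend to a maximal subgroup H of M.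
    obtain ⟨P⟩ := (inferInstance : Nonempty (Sylow p M))
    set Pm : Subgroup G := (P : Subgroup M).map M.subtype with hPm
    have hPmle : Pm ≤ M := Subgroup.map_subtype_le _
    have hcardPm : Nat.card Pm = Nat.card P :=
      (Nat.card_congr ((P : Subgroup M).equivMapOfInjective M.subtype
        M.subtype_injective).toEquiv).symm
    have hpP : p ∣ Nat.card Pm := by
      rw [hcardPm]
      have h1 : Nat.card (P : Subgroup M) * (P : Subgroup M).index = Nat.card M :=
        Subgroup.card_mul_index _
      have h2 : ¬ p ∣ (P : Subgroup M).index := P.not_dvd_index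
      rcases (Nat.Prime.dvd_mul hp).mp (h1 ▸ hpM) with h | h
      · exact h
      · exact absurd h h2
    have hPmlt : Pm < M := by
      refine lt_of_le_of_ne hPmle ?_
      intro h
      apply hPG
      have : IsPGroup p Pm := P.2.map M.subtype
      rw [h] at this
      exact this
    -- find a maximal element of {K | Pm ≤ K ∧ K < M}
    obtain ⟨H, ⟨hPH, hHM⟩, hmax⟩ := Set.Finite.exists_maximalFor (id : Subgroup G → Subgroup G)
      {K : Subgroup G | Pm ≤ K ∧ K < M} (Set.toFinite _) ⟨Pm, le_refl _, hPmlt⟩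
    have h2max : Is2Maximal H := by
      refine ⟨M, hM, hHM, fun K hHK hKM => ?_⟩
      by_contra hne
      have hKlt : K < M := lt_of_le_of_ne hKM hne
      have := hmax (j := K) ⟨hPH.trans hHK.le, hKlt⟩ hHK.le
      exact absurd this hHK.not_ge
    have hhH := hhall H h2max
    have hpH : p ∣ Nat.card H := hpP.trans (Subgroup.card_dvd_of_le hPH)
    have hpIH : p ∣ H.index := hpI.trans (Subgroup.index_dvd_of_le hHM.le)
    exact hp.not_dvd_one (hhH ▸ Nat.dvd_gcd hpH hpIH)
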